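/- arXiv:2003.09972 — 4 statements merged into one kernel-verified Lean document; each statement's English description precedes it below -/
import Mathlib

section
/- Fix real constants γ > 0 and δ > 0 and a sequence ξ : ℕ → [0,1). Define a coupled sequence (A_k, B_k, M_k) in ℕ³ recursively as follows, with Λ_k := max{γ(A_k+B_k)+δ·A_k·B_k, γ·M_k+δ·M_k²}: the state (0,0,0) is absorbing; otherwise, if A_k ≤ B_k, set (A_{k+1},B_{k+1}) = (A_k+1,B_k) if ξ_{k+1} ∈ [0, γA_k/Λ_k), (A_k,B_k+1) if ξ_{k+1} ∈ [γA_k/Λ_k, γ(A_k+B_k)/Λ_k), (A_k−1,B_k−1) if ξ_{k+1} ∈ [1−δA_kB_k/Λ_k, 1), and (A_k,B_k) otherwise; if A_k > B_k the roles of A_k and B_k in this rule are exchanged; in both cases set M_{k+1} = M_k+1 if ξ_{k+1} ∈ [0, γM_k/Λ_k), M_{k+1} = M_k−1 if ξ_{k+1} ∈ [1−δM_k²/Λ_k, 1), and M_{k+1} = M_k otherwise. Then, if M_0 = min{A_0, B_0}, for every k ∈ ℕ we have min{A_k, B_k} ≤ M_k. -/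
open Classical in
/-- One step of the discrete-time coupling of the A-B chain with the single-species
birth–death M chain. The state is `(A, B, M)`, `x` is the uniform random variable `ξ_{k+1}`. -/
noncomputable def abmStep (γ δ : ℝ) (s : ℕ × ℕ × ℕ) (x : ℝ) : ℕ × ℕ × ℕ :=
  let a := s.1
  let b := s.2.1
  let m := s.2.2
  if a = 0 ∧ b = 0 ∧ m = 0 then s
  else
    let Λ : ℝ := max (γ * ((a : ℝ) + (b : ℝ)) + δ * (a : ℝ) * (b : ℝ))
                     (γ * (m : ℝ) + δ * (m : ℝ) ^ 2)
    let ab : ℕ × ℕ :=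
      if a ≤ b then
        if x < γ * (a : ℝ) / Λ then (a + 1, b)
        else if x < γ * ((a : ℝ) + (b : ℝ)) / Λ then (a, b + 1)
        else if 1 - δ * (a : ℝ) * (b : ℝ) / Λ ≤ x then (a - 1, b - 1)
        else (a, b)
      else
        -- roles of A and B exchanged
        if x < γ * (b : ℝ) / Λ then (a, b + 1)
        else if x < γ * ((b : ℝ) + (a : ℝ)) / Λ then (a + 1, b)
        else if 1 - δ * (b : ℝ) * (a : ℝ) / Λ ≤ x then (a - 1, b - 1)
        else (a, b)
    let m' : ℕ :=
      if x < γ * (m : ℝ) / Λ then m + 1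
      else if 1 - δ * (m : ℝ) ^ 2 / Λ ≤ x then m - 1
      else m
    (ab.1, ab.2, m')

/-- The coupled trajectory: the `(k+1)`-th transition is driven by `ξ (k+1)`. -/
noncomputable def abmTraj (γ δ : ℝ) (ξ : ℕ → ℝ) (s0 : ℕ × ℕ × ℕ) : ℕ → ℕ × ℕ × ℕ
  | 0 => s0
  | k + 1 => abmStep γ δ (abmTraj γ δ ξ s0 k) (ξ (k + 1))

set_option maxHeartbeats 1000000 in
lemma step_inv (γ δ : ℝ) (hγ : 0 < γ) (hδ : 0 < δ) (x : ℝ)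
    (a b m : ℕ) (h : min a b ≤ m) :
    min (abmStep γ δ (a, b, m) x).1 (abmStep γ δ (a, b, m) x).2.1
      ≤ (abmStep γ δ (a, b, m) x).2.2 := by
  by_cases h0 : a = 0 ∧ b = 0 ∧ m = 0
  · obtain ⟨rfl, rfl, rfl⟩ := h0; simp [abmStep]
  · simp only [abmStep, if_neg h0]
    set Λ : ℝ := max (γ * ((a : ℝ) + (b : ℝ)) + δ * (a : ℝ) * (b : ℝ))
                     (γ * (m : ℝ) + δ * (m : ℝ) ^ 2) with hΛdef
    have ha0 : (0:ℝ) ≤ a := Nat.cast_nonneg a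
    have hb0 : (0:ℝ) ≤ b := Nat.cast_nonneg b
    have hm0 : (0:ℝ) ≤ m := Nat.cast_nonneg m
    have hΛ1 : γ * ((a : ℝ) + (b : ℝ)) + δ * (a : ℝ) * (b : ℝ) ≤ Λ := le_max_left _ _
    have hΛ2 : γ * (m : ℝ) + δ * (m : ℝ) ^ 2 ≤ Λ := le_max_right _ _
    have hΛpos : 0 < Λ := by
      by_cases ha : a = 0
      · by_cases hb : b = 0
        · have hm : m ≠ 0 := by tauto
          have hm1 : (1:ℝ) ≤ m := by exact_mod_cast Nat.one_le_iff_ne_zero.mpr hm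
          refine lt_of_lt_of_le ?_ hΛ2
          nlinarith
        · have hb1 : (1:ℝ) ≤ b := by exact_mod_cast Nat.one_le_iff_ne_zero.mpr hb
          refine lt_of_lt_of_le ?_ hΛ1
          nlinarith [mul_nonneg (mul_nonneg hδ.le ha0) hb0]
      · have ha1 : (1:ℝ) ≤ a := by exact_mod_cast Nat.one_le_iff_ne_zero.mpr ha
        refine lt_of_lt_of_le ?_ hΛ1
        nlinarith [mul_nonneg (mul_nonneg hδ.le ha0) hb0]
    have hinv : (0:ℝ) ≤ Λ⁻¹ := inv_nonneg.mpr hΛpos.le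
    have hdiv : ∀ u v : ℝ, u ≤ v → u / Λ ≤ v / Λ := fun u v huv => by
      rw [div_eq_mul_inv, div_eq_mul_inv]; exact mul_le_mul_of_nonneg_right huv hinv
    have hone : ∀ u v : ℝ, u + v ≤ Λ → u / Λ ≤ 1 - v / Λ := fun u v huv => by
      rw [le_sub_iff_add_le, ← add_div, div_le_one hΛpos]; exact huv
    split_ifs with hab h1 h2 h3 h4 h5 h6 h7 h8 h9 h10 h11 h12 h13 h14 h15 h16 h17 h18 h19 h20 h21 h22
    -- Branch a ≤ b : min a b = a ≤ m
    case _ => -- h1 h2 : both up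
      simp only; omega
    case _ => -- h1 ¬h2 h3 : contradiction
      exfalso
      have hamn : a ≤ m := by omega
      have ham : (a:ℝ) ≤ m := by exact_mod_cast hamn
      exact h2 (lt_of_lt_of_le h1 (hdiv _ _ (by nlinarith)))
    case _ =>
      exfalso
      have hamn : a ≤ m := by omega
      have ham : (a:ℝ) ≤ m := by exact_mod_cast hamn
      exact h2 (lt_of_lt_of_le h1 (hdiv _ _ (by nlinarith)))
    case _ => -- (a, b+1), m+1
      simp only; omega
    case _ => -- (a, b+1), m-1 : need a < m
      have ham : a ≤ m := by omega
      rcases eq_or_lt_of_le ham with he | hlt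
      · exfalso
        have hba : (a:ℝ) ≤ b := by exact_mod_cast hab
        have hme : (m:ℝ) = a := by exact_mod_cast he.symm
        have hk : x < 1 - δ * (m:ℝ) ^ 2 / Λ := by
          have := hdiv (δ * (m:ℝ) ^ 2) (δ * (a:ℝ) * b) (by rw [hme]; nlinarith [mul_nonneg (mul_nonneg hδ.le ha0) (sub_nonneg.mpr hba)])
          have := hone _ _ hΛ1
          linarith
        linarith
      · simp only; omega
    case _ => simp only; omega
    case _ => -- (a-1,b-1), m+1
      have ham : a ≤ m := by omega
      simp only; omega
    case _ =>
      have ham : a ≤ m := by omega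
      simp only; omega
    case _ =>
      have ham : a ≤ m := by omega
      simp only; omega
    case _ => simp only; omega
    case _ => -- stay, m-1
      have ham : a ≤ m := by omega
      rcases eq_or_lt_of_le ham with he | hlt
      · exfalso
        push_neg at h7
        have hba : (a:ℝ) ≤ b := by exact_mod_cast hab
        have hme : (m:ℝ) = a := by exact_mod_cast he.symm
        have hk : x < 1 - δ * (m:ℝ) ^ 2 / Λ := by
          have := hdiv (δ * (m:ℝ) ^ 2) (δ * (a:ℝ) * b) (by rw [hme]; nlinarith [mul_nonneg (mul_nonneg hδ.le ha0) (sub_nonneg.mpr hba)])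
          linarith
        linarith
      · simp only; omega
    case _ => simp only; omega
    -- Branch b < a : min a b = b ≤ m
    case _ => simp only; omega
    case _ =>
      exfalso
      have hbmn : b ≤ m := by omega
      have hbm : (b:ℝ) ≤ m := by exact_mod_cast hbmn
      exact h13 (lt_of_lt_of_le h12 (hdiv _ _ (by nlinarith)))
    case _ =>
      exfalso
      have hbmn : b ≤ m := by omega
      have hbm : (b:ℝ) ≤ m := by exact_mod_cast hbmn
      exact h13 (lt_of_lt_of_le h12 (hdiv _ _ (by nlinarith)))
    case _ => simp only; omega
    case _ => -- (a+1,b), m-1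
      have hbm : b ≤ m := by omega
      rcases eq_or_lt_of_le hbm with he | hlt
      · exfalso
        have hban : b ≤ a := by omega
        have hba : (b:ℝ) ≤ a := by exact_mod_cast hban
        have hme : (m:ℝ) = b := by exact_mod_cast he.symm
        have hΛ1' : γ * ((b:ℝ) + a) + δ * (b:ℝ) * a ≤ Λ := by
          calc γ * ((b:ℝ) + a) + δ * (b:ℝ) * a = γ * ((a:ℝ) + b) + δ * (a:ℝ) * b := by ring
            _ ≤ Λ := hΛ1
        have hk : x < 1 - δ * (m:ℝ) ^ 2 / Λ := by
          have := hdiv (δ * (m:ℝ) ^ 2) (δ * (b:ℝ) * a) (by rw [hme]; nlinarith [mul_nonneg (mul_nonneg hδ.le hb0) (sub_nonneg.mpr hba)])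
          have := hone _ _ hΛ1'
          linarith
        linarith
      · simp only; omega
    case _ => simp only; omega
    case _ =>
      have hbm : b ≤ m := by omega
      simp only; omega
    case _ =>
      have hbm : b ≤ m := by omega
      simp only; omega
    case _ =>
      have hbm : b ≤ m := by omega
      simp only; omega
    case _ => simp only; omega
    case _ => -- stay, m-1
      have hbm : b ≤ m := by omega
      rcases eq_or_lt_of_le hbm with he | hlt
      · exfalso
        push_neg at h18
        have hban : b ≤ a := by omega
        have hba : (b:ℝ) ≤ a := by exact_mod_cast hban
        have hme : (m:ℝ) = b := by exact_mod_cast he.symm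
        have hk : x < 1 - δ * (m:ℝ) ^ 2 / Λ := by
          have := hdiv (δ * (m:ℝ) ^ 2) (δ * (b:ℝ) * a) (by rw [hme]; nlinarith [mul_nonneg (mul_nonneg hδ.le hb0) (sub_nonneg.mpr hba)])
          linarith
        linarith
      · simp only; omega
    case _ => simp only; omega

/-- In the coupled process, if `M 0 = min (A 0) (B 0)`, then
`min (A k) (B k) ≤ M k` for every `k`. -/
theorem abm_coupling_min_le (γ δ : ℝ) (hγ : 0 < γ) (hδ : 0 < δ)
    (ξ : ℕ → ℝ) (hξ : ∀ k, 0 ≤ ξ k ∧ ξ k < 1)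
    (A B M : ℕ → ℕ)
    (hA : ∀ k, A k = (abmTraj γ δ ξ (A 0, B 0, M 0) k).1)
    (hB : ∀ k, B k = (abmTraj γ δ ξ (A 0, B 0, M 0) k).2.1)
    (hM : ∀ k, M k = (abmTraj γ δ ξ (A 0, B 0, M 0) k).2.2)
    (hM0 : M 0 = min (A 0) (B 0)) :
    ∀ k : ℕ, min (A k) (B k) ≤ M k := by
  intro k
  induction k with
  | zero => exact le_of_eq hM0.symm
  | succ k ih =>
    rw [hA (k+1), hB (k+1), hM (k+1)]
    show min (abmStep γ δ (abmTraj γ δ ξ (A 0, B 0, M 0) k) (ξ (k+1))).1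
          (abmStep γ δ (abmTraj γ δ ξ (A 0, B 0, M 0) k) (ξ (k+1))).2.1
        ≤ (abmStep γ δ (abmTraj γ δ ξ (A 0, B 0, M 0) k) (ξ (k+1))).2.2
    have := step_inv γ δ hγ hδ (ξ (k+1))
      (abmTraj γ δ ξ (A 0, B 0, M 0) k).1
      (abmTraj γ δ ξ (A 0, B 0, M 0) k).2.1
      (abmTraj γ δ ξ (A 0, B 0, M 0) k).2.2
      (by rw [← hA k, ← hB k, ← hM k]; exact ih)
    exact this
end

section
/- For every real α > 0 and every natural number M ≥ 1, the double series ∑_{j=1}^{M} ∑_{k=j−1}^{∞} α^{k−j+1} · (j−1)! / ((k+1)! · (k+1)) is at most e^{α} · π²/6. -/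
/-- The double series `∑_{j=1}^{M} ∑_{k=j-1}^{∞} α^{k-j+1} (j-1)! / ((k+1)! (k+1))`
is at most `e^α · π²/6`.  The inner series is reindexed by `k = j - 1 + i`, so the
term becomes `α^i (j-1)! / ((j+i)! (j+i))`. -/
theorem expected_extinction_time_bound (α : ℝ) (hα : 0 < α) (M : ℕ) (hM : 1 ≤ M) :
    ∑ j ∈ Finset.Icc 1 M, ∑' i : ℕ,
        α ^ i * (Nat.factorial (j - 1) : ℝ) /
          ((Nat.factorial (j + i) : ℝ) * ((j : ℝ) + (i : ℝ))) ≤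
      Real.exp α * (Real.pi ^ 2 / 6) := by
  have hexp : HasSum (fun i : ℕ => α ^ i / (Nat.factorial i : ℝ)) (Real.exp α) := by
    rw [Real.exp_eq_exp_ℝ]
    exact NormedSpace.expSeries_div_hasSum_exp α
  -- termwise bound
  have hterm : ∀ j ∈ Finset.Icc 1 M, ∀ i : ℕ,
      α ^ i * (Nat.factorial (j - 1) : ℝ) /
          ((Nat.factorial (j + i) : ℝ) * ((j : ℝ) + (i : ℝ)))
        ≤ (α ^ i / (Nat.factorial i : ℝ)) * (1 / (j : ℝ) ^ 2) := by
    intro j hj i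
    obtain ⟨hj1, _⟩ := Finset.mem_Icc.mp hj
    have hjpos : (0 : ℝ) < j := by exact_mod_cast hj1
    have key : (Nat.factorial (j - 1) : ℕ) * (Nat.factorial i) * j ^ 2
        ≤ Nat.factorial (j + i) * (j + i) := by
      obtain ⟨m, rfl⟩ := Nat.exists_eq_add_of_le hj1
      have h1 : Nat.factorial (1 + m - 1) * (1 + m) = Nat.factorial (1 + m) := by
        simp [Nat.add_sub_cancel_left, Nat.factorial_succ, Nat.add_comm 1 m, mul_comm]
      have h2 : Nat.factorial (1 + m) * Nat.factorial i ≤ Nat.factorial (1 + m + i) :=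
        Nat.le_of_dvd (Nat.factorial_pos _) (Nat.factorial_mul_factorial_dvd_factorial_add _ _)
      calc Nat.factorial (1 + m - 1) * Nat.factorial i * (1 + m) ^ 2
          = (Nat.factorial (1 + m - 1) * (1 + m)) * Nat.factorial i * (1 + m) := by ring
        _ = Nat.factorial (1 + m) * Nat.factorial i * (1 + m) := by rw [h1]
        _ ≤ Nat.factorial (1 + m + i) * (1 + m + i) :=
            Nat.mul_le_mul h2 (Nat.le_add_right _ i)
    have keyR : (Nat.factorial (j - 1) : ℝ) * (Nat.factorial i) * (j : ℝ) ^ 2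
        ≤ (Nat.factorial (j + i) : ℝ) * ((j : ℝ) + (i : ℝ)) := by
      have := key
      push_cast at this ⊢
      exact_mod_cast this
    have hαi : (0 : ℝ) ≤ α ^ i := le_of_lt (pow_pos hα i)
    have hd1 : (0 : ℝ) < (Nat.factorial (j + i) : ℝ) * ((j : ℝ) + (i : ℝ)) := by
      have h3 : (0:ℝ) < (Nat.factorial (j+i) : ℝ) := by positivity
      positivity
    have hd2 : (0 : ℝ) < (Nat.factorial i : ℝ) * (j : ℝ) ^ 2 := by positivity
    have hrhs : (α ^ i / (Nat.factorial i : ℝ)) * (1 / (j : ℝ) ^ 2)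
        = α ^ i / ((Nat.factorial i : ℝ) * (j : ℝ) ^ 2) := by ring
    rw [hrhs, div_le_div_iff₀ hd1 hd2]
    nlinarith [mul_le_mul_of_nonneg_left keyR hαi]
  -- summability of the majorant
  have hmaj : ∀ j : ℕ, Summable (fun i : ℕ => (α ^ i / (Nat.factorial i : ℝ)) * (1 / (j : ℝ) ^ 2)) :=
    fun j => hexp.summable.mul_right _
  have hnonneg : ∀ j i : ℕ, (0:ℝ) ≤ α ^ i * (Nat.factorial (j - 1) : ℝ) /
          ((Nat.factorial (j + i) : ℝ) * ((j : ℝ) + (i : ℝ))) := by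
    intro j i
    positivity
  have hsummable : ∀ j ∈ Finset.Icc 1 M, Summable (fun i : ℕ =>
      α ^ i * (Nat.factorial (j - 1) : ℝ) /
        ((Nat.factorial (j + i) : ℝ) * ((j : ℝ) + (i : ℝ)))) := by
    intro j hj
    exact (hmaj j).of_nonneg_of_le (hnonneg j) (hterm j hj)
  have hinner : ∀ j ∈ Finset.Icc 1 M,
      (∑' i : ℕ, α ^ i * (Nat.factorial (j - 1) : ℝ) /
        ((Nat.factorial (j + i) : ℝ) * ((j : ℝ) + (i : ℝ))))
      ≤ Real.exp α * (1 / (j : ℝ) ^ 2) := by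
    intro j hj
    have := Summable.tsum_le_tsum (hterm j hj) (hsummable j hj) (hmaj j)
    refine this.trans_eq ?_
    rw [tsum_mul_right, hexp.tsum_eq]
  calc ∑ j ∈ Finset.Icc 1 M, ∑' i : ℕ,
        α ^ i * (Nat.factorial (j - 1) : ℝ) /
          ((Nat.factorial (j + i) : ℝ) * ((j : ℝ) + (i : ℝ)))
      ≤ ∑ j ∈ Finset.Icc 1 M, Real.exp α * (1 / (j : ℝ) ^ 2) :=
        Finset.sum_le_sum hinner
    _ = Real.exp α * ∑ j ∈ Finset.Icc 1 M, (1 / (j : ℝ) ^ 2) := by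
        rw [Finset.mul_sum]
    _ ≤ Real.exp α * (Real.pi ^ 2 / 6) := by
        refine mul_le_mul_of_nonneg_left ?_ (Real.exp_pos α).le
        have hz : HasSum (fun n : ℕ => (1 : ℝ) / (n : ℝ) ^ 2) (Real.pi ^ 2 / 6) :=
          hasSum_zeta_two
        exact le_of_le_of_eq (Summable.sum_le_tsum (Finset.Icc 1 M)
          (fun n _ => by positivity) hz.summable) hz.tsum_eq
end

section
/- For all natural numbers X and Y with X ≥ 3Y and Y ≥ 1, the regularized incomplete beta function at 3/4 satisfies I_{3/4}(X, Y) ≤ I_{3/4}(X+3, Y+1). -/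
open Finset

/-- The regularized incomplete beta function `I_z(a, b)` for natural parameters `a, b ≥ 1`,
defined via real integrals. -/
noncomputable def regIncBeta (z : ℝ) (a b : ℕ) : ℝ :=
  (∫ t in (0 : ℝ)..z, t ^ (a - 1) * (1 - t) ^ (b - 1)) /
  (∫ t in (0 : ℝ)..1, t ^ (a - 1) * (1 - t) ^ (b - 1))

open Finset

/-- Single binomial term. -/
noncomputable def bterm (n j : ℕ) (z : ℝ) : ℝ :=
  (n.choose j : ℝ) * z ^ j * (1 - z) ^ (n - j)

/-- Binomial tail sum. -/
noncomputable def gsum (n a : ℕ) (z : ℝ) : ℝ :=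
  ∑ j ∈ Finset.Ico a (n + 1), bterm n j z

lemma gsum_split (n m : ℕ) (z : ℝ) :
    gsum n m z = bterm n m z + gsum n (m + 1) z := by
  by_cases h : m ≤ n
  · rw [gsum, Finset.sum_eq_sum_Ico_succ_bot (by omega : m < n + 1)]
    rfl
  · have h1 : n.choose m = 0 := Nat.choose_eq_zero_of_lt (by omega)
    have h2 : Finset.Ico m (n+1) = ∅ := Finset.Ico_eq_empty (by omega)
    have h3 : Finset.Ico (m+1) (n+1) = ∅ := Finset.Ico_eq_empty (by omega)
    simp [gsum, bterm, h1, h2, h3]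

lemma gsum_zero (n a : ℕ) (ha : 1 ≤ a) : gsum n a 0 = 0 := by
  rw [gsum]
  apply Finset.sum_eq_zero
  intro j hj
  rw [Finset.mem_Ico] at hj
  rw [bterm, zero_pow (by omega : j ≠ 0)]
  ring

lemma gsum_one (n a : ℕ) (ha : a ≤ n) : gsum n a 1 = 1 := by
  rw [gsum, Finset.sum_Ico_succ_top (by omega : a ≤ n)]
  have : ∀ j ∈ Finset.Ico a n, bterm n j 1 = 0 := by
    intro j hj
    rw [Finset.mem_Ico] at hj
    rw [bterm]
    rw [show (1:ℝ) - 1 = 0 by ring, zero_pow (by omega : n - j ≠ 0)]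
    ring
  rw [Finset.sum_eq_zero this, bterm]
  simp

lemma pascal (n a : ℕ) (z : ℝ) :
    gsum (n + 1) (a + 1) z = z * gsum n a z + (1 - z) * gsum n (a + 1) z := by
  rw [gsum, gsum, gsum, Finset.sum_Ico_eq_sum_range, Finset.sum_Ico_eq_sum_range,
    Finset.sum_Ico_eq_sum_range]
  have e1 : n + 1 + 1 - (a + 1) = n + 1 - a := by omega
  rw [e1]
  have key : ∀ i ∈ Finset.range (n + 1 - a),
      bterm (n+1) (a+1+i) z = z * bterm n (a+i) z + (1-z) * bterm n (a+1+i) z := by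
    intro i hi
    rw [Finset.mem_range] at hi
    have hji : a + i ≤ n := by omega
    rw [bterm, bterm, bterm]
    rw [show a + 1 + i = (a + i) + 1 by ring, Nat.choose_succ_succ n (a+i)]
    push_cast
    by_cases htop : a + i = n
    · have h0 : n.choose (a + i + 1) = 0 := Nat.choose_eq_zero_of_lt (by omega)
      simp only [Nat.succ_eq_add_one]
      rw [h0, htop]
      push_cast
      simp
      ring
    · simp only [Nat.succ_eq_add_one]
      have h2 : n - (a + i) = (n - (a + i + 1)) + 1 := by omega
      rw [h2]
      ring
  rw [Finset.sum_congr rfl key, Finset.sum_add_distrib, ← Finset.mul_sum, ← Finset.mul_sum]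
  congr 1
  by_cases h : a ≤ n
  · rw [show n + 1 - a = (n + 1 - (a+1)) + 1 by omega, Finset.sum_range_succ]
    have : bterm n (a + 1 + (n + 1 - (a + 1))) z = 0 := by
      have hh : a + 1 + (n + 1 - (a + 1)) = n + 1 := by omega
      rw [hh]
      rw [bterm, Nat.choose_eq_zero_of_lt (by omega)]
      push_cast; ring
    rw [this, add_zero]
  · rw [show n + 1 - a = 0 by omega, show n + 1 - (a+1) = 0 by omega]

lemma gsum_hasDerivAt (n a : ℕ) (ha : 1 ≤ a) (han : a ≤ n) (z : ℝ) :
    HasDerivAt (fun w => gsum n a w)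
      ((n : ℝ) * ((n - 1).choose (a - 1) : ℝ) * z ^ (a - 1) * (1 - z) ^ (n - a)) z := by
  set u : ℕ → ℝ := fun j =>
    (n : ℝ) * ((n - 1).choose (j - 1) : ℝ) * z ^ (j - 1) * (1 - z) ^ (n - j) with hu
  have hterm : ∀ j ∈ Finset.Ico a (n + 1),
      HasDerivAt (fun w => bterm n j w) (u j - u (j + 1)) z := by
    intro j hj
    rw [Finset.mem_Ico] at hj
    obtain ⟨k, rfl⟩ : ∃ k, j = k + 1 := ⟨j - 1, by omega⟩
    have h1 : HasDerivAt (fun w : ℝ => w ^ (k + 1)) (((k:ℝ) + 1) * z ^ k) z := by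
      simpa using hasDerivAt_pow (k + 1) z
    have h2 : HasDerivAt (fun w : ℝ => (1 - w) ^ (n - (k + 1)))
        (((n - (k + 1) : ℕ) : ℝ) * (1 - z) ^ (n - (k + 1) - 1) * (0 - 1)) z := by
      exact (hasDerivAt_pow (n - (k + 1)) (1 - z)).comp z
        ((hasDerivAt_const z 1).sub (hasDerivAt_id z))
    have h3 := (h1.mul h2).const_mul ((n.choose (k + 1) : ℝ))
    have hfun : (fun w => bterm n (k + 1) w)
        = fun w : ℝ => (n.choose (k + 1) : ℝ) * (w ^ (k + 1) * (1 - w) ^ (n - (k + 1))) := by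
      funext w; rw [bterm]; ring
    rw [hfun]
    refine HasDerivAt.congr_deriv h3 (Eq.symm ?_)
    simp only [hu, Nat.add_sub_cancel]
    -- goal: u (k+1) - u (k+2) = C * ((k+1) z^k (1-z)^(n-(k+1)) + z^(k+1) * ((n-(k+1)) (1-z)^(n-(k+1)-1) * (0-1)))
    have hn1 : 1 ≤ n := by omega
    have hA : n * ((n - 1).choose k) = n.choose (k + 1) * (k + 1) := by
      have h := Nat.add_one_mul_choose_eq (n - 1) k
      rw [show n - 1 + 1 = n from by omega] at h
      exact h
    have hA' : (n : ℝ) * ((n - 1).choose k : ℝ) = (n.choose (k + 1) : ℝ) * ((k : ℝ) + 1) := by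
      exact_mod_cast hA
    by_cases htop : k + 1 = n
    · have hz : (n - 1).choose (k + 1) = 0 := Nat.choose_eq_zero_of_lt (by omega)
      simp only [hz, show n - (k+1) = 0 from by omega, show n - (k+1+1) = 0 from by omega,
        Nat.cast_zero, pow_zero]
      linear_combination z ^ k * hA'
    · obtain ⟨d, rfl⟩ : ∃ d, n = k + 2 + d := ⟨n - (k + 2), by omega⟩
      have hB : (k + 2 + d).choose (k + 1) * (d + 1) = (k + 2 + d) * ((k + 2 + d - 1).choose (k + 1)) := by
        rw [show d + 1 = k + 2 + d - (k + 1) from by omega, ← Nat.choose_succ_right_eq]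
        have h2' := Nat.add_one_mul_choose_eq (k + 2 + d - 1) (k + 1)
        rw [show k + 2 + d - 1 + 1 = k + 2 + d from by omega] at h2'
        exact h2'.symm
      have hB' : ((k + 2 + d).choose (k + 1) : ℝ) * ((d:ℝ) + 1)
          = ((k:ℝ) + 2 + d) * (((k + 2 + d - 1).choose (k + 1)) : ℝ) := by exact_mod_cast hB
      simp only [show k + 2 + d - (k + 1) = d + 1 from by omega,
        show k + 2 + d - (k + 1 + 1) = d from by omega,
        show d + 1 - 1 = d from by omega]
      push_cast at hA' hB' ⊢
      linear_combination (z ^ k * (1 - z) ^ (d + 1)) * hA' + (z ^ (k + 1) * (1 - z) ^ d) * hB'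
  have hsum := HasDerivAt.fun_sum hterm
  have htel : (∑ j ∈ Finset.Ico a (n + 1), (u j - u (j + 1)))
      = (n : ℝ) * ((n - 1).choose (a - 1) : ℝ) * z ^ (a - 1) * (1 - z) ^ (n - a) := by
    rw [Finset.sum_Ico_eq_sum_range]
    have tel : (∑ i ∈ Finset.range (n + 1 - a), (u (a + i) - u (a + i + 1)))
        = u (a + 0) - u (a + (n + 1 - a)) :=
      Finset.sum_range_sub' (fun i => u (a + i)) (n + 1 - a)
    rw [tel, show a + (n + 1 - a) = n + 1 from by omega, add_zero]
    simp only [hu]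
    rw [show n + 1 - 1 = n from by omega, Nat.choose_eq_zero_of_lt (show n - 1 < n by omega),
      show n - (n + 1) = 0 from by omega]
    push_cast
    ring
  rw [← htel]
  exact hsum

lemma regIncBeta_eq (z : ℝ) (a b : ℕ) (ha : 1 ≤ a) (hb : 1 ≤ b) :
    regIncBeta z a b = gsum (a + b - 1) a z := by
  set n := a + b - 1 with hn
  have han : a ≤ n := by omega
  have hn1 : 1 ≤ n := by omega
  set c : ℝ := (n : ℝ) * ((n - 1).choose (a - 1) : ℝ) with hc
  have hcpos : 0 < c := by
    apply mul_pos
    · exact_mod_cast hn1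
    · exact_mod_cast Nat.choose_pos (show a - 1 ≤ n - 1 by omega)
  have hna : n - a = b - 1 := by omega
  have hderiv : ∀ w : ℝ, HasDerivAt (fun t => gsum n a t / c)
      (w ^ (a - 1) * (1 - w) ^ (b - 1)) w := by
    intro w
    have h := (gsum_hasDerivAt n a ha han w).div_const c
    rw [← hna]
    refine HasDerivAt.congr_deriv h (Eq.symm ?_)
    rw [hc]
    have hch : ((n - 1).choose (a - 1) : ℝ) ≠ 0 := by
      exact_mod_cast (Nat.choose_pos (show a - 1 ≤ n - 1 by omega)).ne'
    have hn0 : (n : ℝ) ≠ 0 := by exact_mod_cast (show n ≠ 0 by omega)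
    field_simp
  have hcont : ∀ r : ℝ, IntervalIntegrable (fun t : ℝ => t ^ (a - 1) * (1 - t) ^ (b - 1))
      MeasureTheory.volume 0 r := by
    intro r
    apply Continuous.intervalIntegrable
    fun_prop
  have hint : ∀ r : ℝ, (∫ t in (0 : ℝ)..r, t ^ (a - 1) * (1 - t) ^ (b - 1))
      = gsum n a r / c - gsum n a 0 / c := by
    intro r
    exact intervalIntegral.integral_eq_sub_of_hasDerivAt (fun t _ => hderiv t) (hcont r)
  rw [regIncBeta, hint z, hint 1, gsum_zero n a ha, gsum_one n a han]
  rw [zero_div, sub_zero, sub_zero]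
  field_simp

lemma bterm_nonneg (n j : ℕ) : (0 : ℝ) ≤ bterm n j (3 / 4) := by
  rw [bterm]
  have h1 : (0:ℝ) ≤ (3/4 : ℝ) := by norm_num
  have h2 : (0:ℝ) ≤ (1 - 3/4 : ℝ) := by norm_num
  positivity

lemma bterm_mono (n j : ℕ) (h : 3 * (n - j) ≤ j + 1) :
    bterm n (j + 1) (3 / 4) ≤ bterm n j (3 / 4) := by
  have hnn := bterm_nonneg n j
  by_cases hjn : j < n
  · obtain ⟨d, rfl⟩ : ∃ d, n = j + 1 + d := ⟨n - (j + 1), by omega⟩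
    have key : ((j:ℝ) + 1) * bterm (j + 1 + d) (j + 1) (3/4)
        = 3 * ((d:ℝ) + 1) * bterm (j + 1 + d) j (3/4) := by
      rw [bterm, bterm, show j + 1 + d - (j + 1) = d from by omega,
        show j + 1 + d - j = d + 1 from by omega]
      have hc := Nat.choose_succ_right_eq (j + 1 + d) j
      rw [show j + 1 + d - j = d + 1 from by omega] at hc
      have hc' : (((j+1+d).choose (j+1) : ℝ)) * ((j:ℝ) + 1)
          = (((j+1+d).choose j : ℝ)) * ((d:ℝ) + 1) := by exact_mod_cast hc
      norm_num
      linear_combination ((3/4:ℝ)^(j+1) * (4:ℝ)⁻¹ ^ d) * hc'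
    have h3 : 3 * ((d:ℝ) + 1) ≤ (j:ℝ) + 1 := by
      exact_mod_cast (show 3 * (d + 1) ≤ j + 1 by omega)
    have hmul : ((j:ℝ) + 1) * bterm (j+1+d) (j+1) (3/4)
        ≤ ((j:ℝ) + 1) * bterm (j+1+d) j (3/4) := by nlinarith
    have hjpos : (0:ℝ) < (j:ℝ) + 1 := by positivity
    exact le_of_mul_le_mul_left hmul hjpos
  · have h0 : n.choose (j + 1) = 0 := Nat.choose_eq_zero_of_lt (by omega)
    rw [bterm, h0, Nat.cast_zero, zero_mul, zero_mul]
    exact hnn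

/-- `I_{3/4}` is non-decreasing along the discretized line of slope `1/3`:
if `X ≥ 3Y` and `Y ≥ 1`, then `I_{3/4}(X, Y) ≤ I_{3/4}(X+3, Y+1)`. -/
theorem beta_increasing_along_line (X Y : ℕ) (hY : 1 ≤ Y) (hXY : 3 * Y ≤ X) :
    regIncBeta (3 / 4) X Y ≤ regIncBeta (3 / 4) (X + 3) (Y + 1) := by
  obtain ⟨x, rfl⟩ : ∃ x, X = x + 3 := ⟨X - 3, by omega⟩
  rw [regIncBeta_eq _ _ _ (by omega) hY, regIncBeta_eq _ _ _ (by omega) (by omega)]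
  set n := x + 2 + Y with hn
  rw [show x + 3 + Y - 1 = n from by omega,
    show x + 3 + 3 + (Y + 1) - 1 = n + 4 from by omega,
    show x + 3 + 3 = x + 6 from by omega]
  set z : ℝ := 3 / 4 with hz
  have p4 : gsum (n+4) (x+6) z = z * gsum (n+3) (x+5) z + (1-z) * gsum (n+3) (x+6) z :=
    pascal (n+3) (x+5) z
  have p3a : gsum (n+3) (x+5) z = z * gsum (n+2) (x+4) z + (1-z) * gsum (n+2) (x+5) z :=
    pascal (n+2) (x+4) z
  have p3b : gsum (n+3) (x+6) z = z * gsum (n+2) (x+5) z + (1-z) * gsum (n+2) (x+6) z :=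
    pascal (n+2) (x+5) z
  have p2a : gsum (n+2) (x+4) z = z * gsum (n+1) (x+3) z + (1-z) * gsum (n+1) (x+4) z :=
    pascal (n+1) (x+3) z
  have p2b : gsum (n+2) (x+5) z = z * gsum (n+1) (x+4) z + (1-z) * gsum (n+1) (x+5) z :=
    pascal (n+1) (x+4) z
  have p2c : gsum (n+2) (x+6) z = z * gsum (n+1) (x+5) z + (1-z) * gsum (n+1) (x+6) z :=
    pascal (n+1) (x+5) z
  have p1a : gsum (n+1) (x+3) z = z * gsum n (x+2) z + (1-z) * gsum n (x+3) z :=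
    pascal n (x+2) z
  have p1b : gsum (n+1) (x+4) z = z * gsum n (x+3) z + (1-z) * gsum n (x+4) z :=
    pascal n (x+3) z
  have p1c : gsum (n+1) (x+5) z = z * gsum n (x+4) z + (1-z) * gsum n (x+5) z :=
    pascal n (x+4) z
  have p1d : gsum (n+1) (x+6) z = z * gsum n (x+5) z + (1-z) * gsum n (x+6) z :=
    pascal n (x+5) z
  have s0 : gsum n (x+2) z = bterm n (x+2) z + gsum n (x+3) z := gsum_split n (x+2) z
  have s1 : gsum n (x+3) z = bterm n (x+3) z + gsum n (x+4) z := gsum_split n (x+3) z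
  have s2 : gsum n (x+4) z = bterm n (x+4) z + gsum n (x+5) z := gsum_split n (x+4) z
  have s3 : gsum n (x+5) z = bterm n (x+5) z + gsum n (x+6) z := gsum_split n (x+5) z
  have m1 : bterm n (x+3) z ≤ bterm n (x+2) z := by
    have := bterm_mono n (x+2) (by omega)
    simpa [hz] using this
  have m2 : bterm n (x+4) z ≤ bterm n (x+3) z := by
    have := bterm_mono n (x+3) (by omega)
    simpa [hz] using this
  have m3 : bterm n (x+5) z ≤ bterm n (x+4) z := by
    have := bterm_mono n (x+4) (by omega)
    simpa [hz] using this
  rw [hz] at *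
  linarith
end

section
/- For all natural numbers x and y with y ≥ 2 and 3y − 2 ≤ x ≤ 3y, the regularized incomplete beta function satisfies I_{3/4}(x, y) > 0.444. -/
open Finset

/-- Binomial upper tail `P(Bin(n,3/4) ≥ m)`. -/
noncomputable def binTail (m n : ℕ) : ℝ :=
  ∑ j ∈ Finset.Icc m n, (n.choose j : ℝ) * (3/4)^j * (1/4)^(n-j)

lemma binTail_anti {m m' n : ℕ} (h : m ≤ m') : binTail m' n ≤ binTail m n := by
  apply Finset.sum_le_sum_of_subset_of_nonneg (Finset.Icc_subset_Icc_left h)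
  intro i _ _
  positivity

lemma binTail_of_gt {m n : ℕ} (h : n < m) : binTail m n = 0 := by
  unfold binTail
  rw [Finset.Icc_eq_empty (by omega), Finset.sum_empty]

lemma binTail_eq_range (m n M : ℕ) (hM : n+1-m ≤ M) :
    binTail m n = ∑ i ∈ Finset.range M,
      (n.choose (m+i) : ℝ) * (3/4)^(m+i) * (1/4)^(n-m-i) := by
  unfold binTail
  rw [← Finset.Ico_add_one_right_eq_Icc, Finset.sum_Ico_eq_sum_range]
  rw [Finset.sum_subset (Finset.range_subset_range.mpr hM)]
  · apply Finset.sum_congr rfl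
    intro i _
    rw [show n - (m+i) = n - m - i by omega]
  · intro i _ hi
    simp only [Finset.mem_range, not_lt] at hi
    rw [Nat.choose_eq_zero_of_lt (by omega)]
    simp

lemma binTail_succ (m n : ℕ) :
    binTail (m+1) (n+1) = 3/4 * binTail m n + 1/4 * binTail (m+1) n := by
  rcases le_or_gt m n with h | h
  · rw [binTail_eq_range (m+1) (n+1) ((n-m)+1) (by omega),
      binTail_eq_range m n ((n-m)+1) (by omega),
      binTail_eq_range (m+1) n ((n-m)+1) (by omega),
      Finset.mul_sum, Finset.mul_sum, ← Finset.sum_add_distrib]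
    apply Finset.sum_congr rfl
    intro i hi
    simp only [Finset.mem_range] at hi
    rw [show m+1+i = (m+i)+1 by omega, Nat.choose_succ_succ' n (m+i)]
    push_cast
    rcases lt_or_ge i (n-m) with hi' | hi'
    · obtain ⟨e, he⟩ : ∃ e, n-m-i = e+1 := ⟨n-m-i-1, by omega⟩
      rw [he, show n-(m+1)-i = e by omega, pow_succ (3/4 : ℝ) (m+i), pow_succ (1/4 : ℝ) e]
      ring
    · have hieq : i = n - m := by omega
      rw [Nat.choose_eq_zero_of_lt (show n < m+i+1 by omega)]
      rw [pow_succ (3/4 : ℝ) (m+i)]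
      push_cast
      ring
  · rw [binTail_of_gt (by omega), binTail_of_gt (by omega), binTail_of_gt (by omega)]
    ring

lemma binTail_peel (m n : ℕ) :
    binTail m n = (n.choose m : ℝ) * (3/4)^m * (1/4)^(n-m) + binTail (m+1) n := by
  rcases le_or_gt m n with h | h
  · unfold binTail
    rw [Finset.Icc_eq_cons_Ioc h, Finset.sum_cons, ← Finset.Icc_add_one_left_eq_Ioc]
  · rw [binTail_of_gt h, binTail_of_gt (by omega), Nat.choose_eq_zero_of_lt h]
    simp

/-- Core combinatorial inequality. -/
lemma core_choose (m : ℕ) :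
    201 * (4*m+7).choose (3*m+6) + 117 * (4*m+7).choose (3*m+7)
      + 27 * (4*m+7).choose (3*m+8) ≤ 81 * (4*m+7).choose (3*m+5) := by
  set N := 4*m+7 with hN
  have e0 : N.choose (3*m+6) * (3*m+6) = N.choose (3*m+5) * (m+2) := by
    have := Nat.choose_succ_right_eq N (3*m+5)
    rw [show 3*m+5+1 = 3*m+6 by omega, show N - (3*m+5) = m+2 by omega] at this
    exact this
  have e1 : N.choose (3*m+7) * (3*m+7) = N.choose (3*m+6) * (m+1) := by
    have := Nat.choose_succ_right_eq N (3*m+6)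
    rw [show 3*m+6+1 = 3*m+7 by omega, show N - (3*m+6) = m+1 by omega] at this
    exact this
  have e2 : N.choose (3*m+8) * (3*m+8) = N.choose (3*m+7) * m := by
    have := Nat.choose_succ_right_eq N (3*m+7)
    rw [show 3*m+7+1 = 3*m+8 by omega, show N - (3*m+7) = m by omega] at this
    exact this
  have hD : 0 < (3*m+6)*((3*m+7)*(3*m+8)) := by positivity
  apply Nat.le_of_mul_le_mul_right _ hD
  have H0 : N.choose (3*m+6) * ((3*m+6)*((3*m+7)*(3*m+8)))
      = N.choose (3*m+5) * ((m+2)*((3*m+7)*(3*m+8))) := by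
    calc N.choose (3*m+6) * ((3*m+6)*((3*m+7)*(3*m+8)))
        = (N.choose (3*m+6) * (3*m+6)) * ((3*m+7)*(3*m+8)) := by ring
      _ = (N.choose (3*m+5) * (m+2)) * ((3*m+7)*(3*m+8)) := by rw [e0]
      _ = N.choose (3*m+5) * ((m+2)*((3*m+7)*(3*m+8))) := by ring
  have H1 : N.choose (3*m+7) * ((3*m+6)*((3*m+7)*(3*m+8)))
      = N.choose (3*m+5) * ((m+2)*((m+1)*(3*m+8))) := by
    calc N.choose (3*m+7) * ((3*m+6)*((3*m+7)*(3*m+8)))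
        = (N.choose (3*m+7) * (3*m+7)) * ((3*m+6)*(3*m+8)) := by ring
      _ = (N.choose (3*m+6) * (m+1)) * ((3*m+6)*(3*m+8)) := by rw [e1]
      _ = (N.choose (3*m+6) * (3*m+6)) * ((m+1)*(3*m+8)) := by ring
      _ = (N.choose (3*m+5) * (m+2)) * ((m+1)*(3*m+8)) := by rw [e0]
      _ = N.choose (3*m+5) * ((m+2)*((m+1)*(3*m+8))) := by ring
  have H2 : N.choose (3*m+8) * ((3*m+6)*((3*m+7)*(3*m+8)))
      = N.choose (3*m+5) * ((m+2)*((m+1)*m)) := by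
    calc N.choose (3*m+8) * ((3*m+6)*((3*m+7)*(3*m+8)))
        = (N.choose (3*m+8) * (3*m+8)) * ((3*m+6)*(3*m+7)) := by ring
      _ = (N.choose (3*m+7) * m) * ((3*m+6)*(3*m+7)) := by rw [e2]
      _ = (N.choose (3*m+7) * (3*m+7)) * (m*(3*m+6)) := by ring
      _ = (N.choose (3*m+6) * (m+1)) * (m*(3*m+6)) := by rw [e1]
      _ = (N.choose (3*m+6) * (3*m+6)) * ((m+1)*m) := by ring
      _ = (N.choose (3*m+5) * (m+2)) * ((m+1)*m) := by rw [e0]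
      _ = N.choose (3*m+5) * ((m+2)*((m+1)*m)) := by ring
  calc (201 * N.choose (3*m+6) + 117 * N.choose (3*m+7) + 27 * N.choose (3*m+8))
        * ((3*m+6)*((3*m+7)*(3*m+8)))
      = 201 * (N.choose (3*m+6) * ((3*m+6)*((3*m+7)*(3*m+8))))
        + 117 * (N.choose (3*m+7) * ((3*m+6)*((3*m+7)*(3*m+8))))
        + 27 * (N.choose (3*m+8) * ((3*m+6)*((3*m+7)*(3*m+8)))) := by ring
    _ = N.choose (3*m+5) * (201*((m+2)*((3*m+7)*(3*m+8)))
        + 117*((m+2)*((m+1)*(3*m+8))) + 27*((m+2)*((m+1)*m))) := by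
        rw [H0, H1, H2]; ring
    _ ≤ N.choose (3*m+5) * (81*((3*m+6)*((3*m+7)*(3*m+8)))) := by
        apply Nat.mul_le_mul_left
        nlinarith [sq_nonneg m]
    _ = 81 * N.choose (3*m+5) * ((3*m+6)*((3*m+7)*(3*m+8))) := by ring

lemma binTail_succ' {m n m' n' : ℕ} (hm : m' = m+1) (hn : n' = n+1) :
    binTail m' n' = 3/4 * binTail m n + 1/4 * binTail m' n := by
  subst hm; subst hn; exact binTail_succ m n

lemma term_eq (N j : ℕ) :
    (N.choose j : ℝ) * (3/4)^j * (1/4)^(N-j)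
      = ((N.choose j * 3^j : ℕ) : ℝ) * (1/4)^N := by
  rcases le_or_gt j N with h | h
  · push_cast
    have hq : (1/4:ℝ)^N = (1/4)^j * (1/4)^(N-j) := by
      rw [← pow_add, show j+(N-j) = N by omega]
    rw [show (3/4 : ℝ) = 3 * (1/4) by norm_num, mul_pow, hq]
    ring
  · rw [Nat.choose_eq_zero_of_lt h]
    simp

lemma binTail_step_ineq (m : ℕ) :
    binTail (3*m+6) (4*m+7) ≤ binTail (3*m+9) (4*m+11) := by
  have E1 := binTail_succ' (show 3*m+9 = (3*m+8)+1 by omega) (show 4*m+11 = (4*m+10)+1 by omega)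
  have E2 := binTail_succ' (show 3*m+8 = (3*m+7)+1 by omega) (show 4*m+10 = (4*m+9)+1 by omega)
  have E3 := binTail_succ' (show 3*m+9 = (3*m+8)+1 by omega) (show 4*m+10 = (4*m+9)+1 by omega)
  have E4 := binTail_succ' (show 3*m+7 = (3*m+6)+1 by omega) (show 4*m+9 = (4*m+8)+1 by omega)
  have E5 := binTail_succ' (show 3*m+8 = (3*m+7)+1 by omega) (show 4*m+9 = (4*m+8)+1 by omega)
  have E6 := binTail_succ' (show 3*m+9 = (3*m+8)+1 by omega) (show 4*m+9 = (4*m+8)+1 by omega)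
  have E7 := binTail_succ' (show 3*m+6 = (3*m+5)+1 by omega) (show 4*m+8 = (4*m+7)+1 by omega)
  have E8 := binTail_succ' (show 3*m+7 = (3*m+6)+1 by omega) (show 4*m+8 = (4*m+7)+1 by omega)
  have E9 := binTail_succ' (show 3*m+8 = (3*m+7)+1 by omega) (show 4*m+8 = (4*m+7)+1 by omega)
  have E10 := binTail_succ' (show 3*m+9 = (3*m+8)+1 by omega) (show 4*m+8 = (4*m+7)+1 by omega)
  have P5 := binTail_peel (3*m+5) (4*m+7)
  have P6 := binTail_peel (3*m+6) (4*m+7)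
  have P7 := binTail_peel (3*m+7) (4*m+7)
  have P8 := binTail_peel (3*m+8) (4*m+7)
  rw [term_eq, show 3*m+5+1 = 3*m+6 by omega] at P5
  rw [term_eq, show 3*m+6+1 = 3*m+7 by omega] at P6
  rw [term_eq, show 3*m+7+1 = 3*m+8 by omega] at P7
  rw [term_eq, show 3*m+8+1 = 3*m+9 by omega] at P8
  -- the key numeric inequality on the pmf terms
  have hbN : 67*((4*m+7).choose (3*m+6) * 3^(3*m+6))
      + 13*((4*m+7).choose (3*m+7) * 3^(3*m+7))
      + ((4*m+7).choose (3*m+8) * 3^(3*m+8))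
      ≤ 81*((4*m+7).choose (3*m+5) * 3^(3*m+5)) := by
    have p6 : (3:ℕ)^(3*m+6) = 3^(3*m+5)*3 := by
      rw [show 3*m+6 = (3*m+5)+1 by omega, pow_succ]
    have p7 : (3:ℕ)^(3*m+7) = 3^(3*m+5)*9 := by
      rw [show 3*m+7 = (3*m+5)+2 by omega, pow_add]; norm_num
    have p8 : (3:ℕ)^(3*m+8) = 3^(3*m+5)*27 := by
      rw [show 3*m+8 = (3*m+5)+3 by omega, pow_add]; norm_num
    calc 67*((4*m+7).choose (3*m+6) * 3^(3*m+6))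
          + 13*((4*m+7).choose (3*m+7) * 3^(3*m+7))
          + ((4*m+7).choose (3*m+8) * 3^(3*m+8))
        = (201 * (4*m+7).choose (3*m+6) + 117 * (4*m+7).choose (3*m+7)
            + 27 * (4*m+7).choose (3*m+8)) * 3^(3*m+5) := by
          rw [p6, p7, p8]; ring
      _ ≤ (81 * (4*m+7).choose (3*m+5)) * 3^(3*m+5) :=
          Nat.mul_le_mul_right _ (core_choose m)
      _ = 81*((4*m+7).choose (3*m+5) * 3^(3*m+5)) := by ring
  have hbR : (67:ℝ)*((4*m+7).choose (3*m+6) * 3^(3*m+6) : ℕ)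
      + 13*((4*m+7).choose (3*m+7) * 3^(3*m+7) : ℕ)
      + ((4*m+7).choose (3*m+8) * 3^(3*m+8) : ℕ)
      ≤ 81*((4*m+7).choose (3*m+5) * 3^(3*m+5) : ℕ) := by
    exact_mod_cast hbN
  have hq : (0:ℝ) ≤ (1/4 : ℝ)^(4*m+7) := by positivity
  have hb := mul_le_mul_of_nonneg_right hbR hq
  nlinarith [hb, E1, E2, E3, E4, E5, E6, E7, E8, E9, E10, P5, P6, P7, P8]

lemma binTail_lower (m : ℕ) : (0.444:ℝ) < binTail (3*m+6) (4*m+7) := by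
  induction m with
  | zero =>
    norm_num
    rw [binTail_peel 6 7, binTail_peel 7 7, binTail_of_gt (by omega)]
    norm_num [Nat.choose]
  | succ m ih =>
    refine lt_of_lt_of_le ih ?_
    rw [show 3*(m+1)+6 = 3*m+9 by ring, show 4*(m+1)+7 = 4*m+11 by ring]
    exact binTail_step_ineq m

lemma binTail_mono_succ (m n : ℕ) : binTail (m+1) (n+1) ≤ binTail m n := by
  rw [binTail_succ]
  have h := binTail_anti (show m ≤ m+1 by omega) (n := n)
  linarith

lemma binTail_mono_succ' {m n m' n' : ℕ} (hm : m' = m+1) (hn : n' = n+1) :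
    binTail m' n' ≤ binTail m n := by
  subst hm; subst hn; exact binTail_mono_succ m n

/-- Auxiliary antiderivative: the Bernstein-type tail sum. -/
noncomputable def auxG (p q : ℕ) (w : ℝ) : ℝ :=
  ∑ i ∈ Finset.range (q+1), ((p+q+1).choose (p+1+i) : ℝ) * (w ^ (p+1+i) * (1-w) ^ (q-i))

lemma hasDerivAt_auxG (p q : ℕ) (z : ℝ) :
    HasDerivAt (auxG p q)
      ((((p+q+1) * (p+q).choose p : ℕ) : ℝ) * (z ^ p * (1-z) ^ q)) z := by
  have key : ∀ i ∈ Finset.range (q+1),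
      HasDerivAt (fun w : ℝ => ((p+q+1).choose (p+1+i) : ℝ) * (w ^ (p+1+i) * (1-w) ^ (q-i)))
        ((fun i => (((p+q+1):ℕ):ℝ) * (((p+q).choose (p+i) : ℝ) * (z^(p+i)*(1-z)^(q-i)))) i
          - (fun i => (((p+q+1):ℕ):ℝ) * (((p+q).choose (p+i) : ℝ) * (z^(p+i)*(1-z)^(q-i)))) (i+1)) z := by
    intro i hi
    simp only [Finset.mem_range] at hi
    have hi' : i ≤ q := by omega
    have hp1 : HasDerivAt (fun w : ℝ => w ^ (p+1+i)) (((p+1+i : ℕ) : ℝ) * z^(p+i)) z := by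
      have h := hasDerivAt_pow (p+1+i) z
      rw [show p+1+i-1 = p+i by omega] at h
      exact h
    have h0 : HasDerivAt (fun w : ℝ => 1 - w) (-1) z := by
      simpa using (hasDerivAt_id' z).const_sub (1:ℝ)
    have hp2 : HasDerivAt (fun w : ℝ => (1-w) ^ (q-i))
        ((((q-i : ℕ) : ℝ) * (1-z)^(q-i-1)) * (-1)) z := by
      exact ((hasDerivAt_pow (q-i) (1-z)).comp z h0)
    have hmul : HasDerivAt (fun w : ℝ => ((p+q+1).choose (p+1+i) : ℝ) * (w ^ (p+1+i) * (1-w) ^ (q-i)))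
        (((p+q+1).choose (p+1+i) : ℝ) * ((((p+1+i : ℕ) : ℝ) * z^(p+i)) * (1-z)^(q-i)
          + z^(p+1+i) * ((((q-i : ℕ) : ℝ) * (1-z)^(q-i-1)) * (-1)))) z :=
      (hp1.mul hp2).const_mul (((p+q+1).choose (p+1+i) : ℝ))
    convert hmul using 1
    have id1 : ((p+q+1) * (p+q).choose (p+i) : ℕ)
        = ((p+q+1).choose (p+(i+1)) * (p+(i+1)) : ℕ) := by
      have h := Nat.add_one_mul_choose_eq (p+q) (p+i)
      rw [show p+i+1 = p+(i+1) by omega] at h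
      exact h
    have id1R : (((p+q+1):ℕ):ℝ) * (((p+q).choose (p+i)):ℝ)
        = (((p+q+1).choose (p+(i+1)) : ℕ):ℝ) * ((p+(i+1) : ℕ):ℝ) := by
      exact_mod_cast id1
    have id2 : ((p+q).choose (p+(i+1)) * (p+q+1) : ℕ)
        = ((p+q+1).choose (p+(i+1)) * (q-i) : ℕ) := by
      have h := Nat.choose_mul_succ_eq (p+q) (p+(i+1))
      rw [show p+q+1 - (p+(i+1)) = q-i by omega] at h
      exact h
    have id2R : (((p+q).choose (p+(i+1)) : ℕ):ℝ) * (((p+q+1):ℕ):ℝ)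
        = (((p+q+1).choose (p+(i+1)) : ℕ):ℝ) * (((q-i : ℕ)):ℝ) := by
      exact_mod_cast id2
    beta_reduce
    rcases lt_or_ge i q with hlt | hge
    · obtain ⟨e, he⟩ : ∃ e, q - i = e+1 := ⟨q-i-1, by omega⟩
      rw [show p+(i+1) = p+i+1 by omega] at id1R id2R
      rw [he] at id2R
      rw [show q-(i+1) = e by omega, show q-i-1 = e by omega, he,
        show p+(i+1) = p+i+1 by omega, show p+1+i = p+i+1 by omega,
        pow_succ z (p+i), pow_succ (1-z) e]
      linear_combination (z^(p+i)*((1-z)^e*(1-z))) * id1R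
        - ((z^(p+i)*z)*(1-z)^e) * id2R
    · rw [show q-i-1 = 0 by omega, show q-(i+1) = 0 by omega, show q-i = 0 by omega,
        Nat.choose_eq_zero_of_lt (show p+q < p+(i+1) by omega),
        show p+i = p+q by omega, show p+1+i = p+q+1 by omega,
        Nat.choose_self, Nat.choose_self]
      push_cast
      ring
  have hsum := HasDerivAt.sum key
  have htel : ∑ i ∈ Finset.range (q+1),
      ((fun i => (((p+q+1):ℕ):ℝ) * (((p+q).choose (p+i) : ℝ) * (z^(p+i)*(1-z)^(q-i)))) i
        - (fun i => (((p+q+1):ℕ):ℝ) * (((p+q).choose (p+i) : ℝ) * (z^(p+i)*(1-z)^(q-i)))) (i+1))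
      = (((p+q+1) * (p+q).choose p : ℕ) : ℝ) * (z ^ p * (1-z) ^ q) := by
    rw [Finset.sum_range_sub']
    simp only [Nat.add_zero, Nat.sub_zero, Nat.choose_eq_zero_of_lt (show p+q < p+(q+1) by omega)]
    push_cast
    ring
  rw [htel] at hsum
  have hfun : auxG p q = ∑ i ∈ Finset.range (q+1),
      fun w : ℝ => ((p+q+1).choose (p+1+i) : ℝ) * (w ^ (p+1+i) * (1-w) ^ (q-i)) := by
    ext w; simp only [auxG, Finset.sum_apply]
  rw [hfun]
  exact hsum

lemma auxK_ne (p q : ℕ) : ((((p+q+1) * (p+q).choose p : ℕ) : ℝ)) ≠ 0 := by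
  have h1 : 0 < (p+q).choose p := Nat.choose_pos (by omega)
  have : 0 < (p+q+1) * (p+q).choose p := by positivity
  exact_mod_cast this.ne'

lemma integral_aux (p q : ℕ) (z : ℝ) :
    ∫ t in (0:ℝ)..z, t^p * (1-t)^q
      = ((((p+q+1) * (p+q).choose p : ℕ) : ℝ))⁻¹ * auxG p q z := by
  set K : ℝ := (((p+q+1) * (p+q).choose p : ℕ) : ℝ) with hK
  have hKne := auxK_ne p q
  have hderiv : ∀ t ∈ Set.uIcc (0:ℝ) z,
      HasDerivAt (fun w => K⁻¹ * auxG p q w) (t^p*(1-t)^q) t := by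
    intro t _
    have h := (hasDerivAt_auxG p q t).const_mul K⁻¹
    rw [← hK, inv_mul_cancel_left₀ hKne] at h
    exact h
  have hint : IntervalIntegrable (fun t : ℝ => t^p*(1-t)^q) MeasureTheory.volume 0 z :=
    (((continuous_pow p).mul ((continuous_const.sub continuous_id).pow q))).intervalIntegrable 0 z
  rw [intervalIntegral.integral_eq_sub_of_hasDerivAt hderiv hint]
  have hG0 : auxG p q 0 = 0 := by
    unfold auxG
    apply Finset.sum_eq_zero
    intro i _
    rw [zero_pow (show p+1+i ≠ 0 by omega)]
    ring
  rw [hG0]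
  ring

lemma auxG_one (p q : ℕ) : auxG p q 1 = 1 := by
  unfold auxG
  rw [Finset.sum_eq_single q]
  · rw [show p+1+q = p+q+1 by omega, Nat.choose_self, Nat.sub_self]
    norm_num
  · intro i hi hne
    simp only [Finset.mem_range] at hi
    rw [show (1:ℝ) - 1 = 0 by ring, zero_pow (show q - i ≠ 0 by omega)]
    ring
  · intro h
    exact absurd (Finset.self_mem_range_succ q) h

lemma regIncBeta_eq_s12 (p q : ℕ) :
    regIncBeta (3/4) (p+1) (q+1) = binTail (p+1) (p+q+1) := by
  unfold regIncBeta
  simp only [Nat.add_sub_cancel]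
  rw [integral_aux p q (3/4), integral_aux p q 1, auxG_one, mul_one, mul_comm,
    mul_div_assoc, div_self (inv_ne_zero (auxK_ne p q)), mul_one]
  rw [binTail_eq_range (p+1) (p+q+1) (q+1) (by omega)]
  unfold auxG
  apply Finset.sum_congr rfl
  intro i _
  rw [show p+q+1-(p+1)-i = q-i by omega, show (1:ℝ) - 3/4 = 1/4 by norm_num]
  ring

/-- For all naturals `x, y` with `y ≥ 2` and `3y − 2 ≤ x ≤ 3y`,
`I_{3/4}(x, y) > 0.444`. -/
theorem regIncBeta_near_line_gt (x y : ℕ) (hy : 2 ≤ y)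
    (hx1 : 3 * y - 2 ≤ x) (hx2 : x ≤ 3 * y) :
    regIncBeta (3 / 4) x y > 0.444 := by
  obtain ⟨m, rfl⟩ : ∃ m, y = m+2 := ⟨y-2, by omega⟩
  obtain ⟨p, rfl⟩ : ∃ p, x = p+1 := ⟨x-1, by omega⟩
  rw [show m+2 = (m+1)+1 from rfl, regIncBeta_eq_s12 p (m+1)]
  have hlow := binTail_lower m
  have h1 : binTail (3*m+6) (4*m+7) ≤ binTail (3*m+5) (4*m+6) :=
    binTail_mono_succ' (show 3*m+6 = (3*m+5)+1 by omega) (show 4*m+7 = (4*m+6)+1 by omega)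
  have h2 : binTail (3*m+5) (4*m+6) ≤ binTail (3*m+4) (4*m+5) :=
    binTail_mono_succ' (show 3*m+5 = (3*m+4)+1 by omega) (show 4*m+6 = (4*m+5)+1 by omega)
  have hc : p = 3*m+3 ∨ p = 3*m+4 ∨ p = 3*m+5 := by omega
  rcases hc with hc | hc | hc <;> subst hc
  · rw [show 3*m+3+1 = 3*m+4 by ring, show 3*m+3+(m+1)+1 = 4*m+5 by ring]
    linarith
  · rw [show 3*m+4+1 = 3*m+5 by ring, show 3*m+4+(m+1)+1 = 4*m+6 by ring]
    linarith
  · rw [show 3*m+5+1 = 3*m+6 by ring, show 3*m+5+(m+1)+1 = 4*m+7 by ring]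
    linarith
end
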